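/- Let y = x′β₀ + e be a regression model in ℝᵖ with finite second moments, λ ≥ 0, fix (x₀, y₀) and let H_ε = (1 − ε)H₀ + ε·δ_{(x₀,y₀)}. Suppose b : [0, δ) → ℝᵖ is differentiable at 0, its value b(0) has b_j(0) ≠ 0 for j = 1,…,k and b_j(0) = 0 for j = k+1,…,p, and for all ε in a right-neighborhood of 0: (a) b_j(ε) = 0 for all j > k, (b) sign(b_j(ε)) = sign(b_j(0)) for all j ≤ k, and (c) for each j ≤ k the first-order condition E_{H_ε}[x_j·(y − x′b(ε))] = λ·sign(b_j(ε)) holds. If E_{H₀}[x_{1:k}x_{1:k}′] is invertible, then b′(0) has last p − k coordinates equal to 0 and first k coordinates equal to (E_{H₀}[x_{1:k}x_{1:k}′])⁻¹·((x₀)_{1:k}·(y₀ − x₀′b(0)) − E_{H₀}[x_{1:k}·(y − x′b(0))]). -/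

import Mathlib

open MeasureTheory ProbabilityTheory Matrix Filter

private lemma lasso_integrable_dirac {α : Type*} [MeasurableSpace α] [MeasurableSingletonClass α]
    (f : α → ℝ) (hf : StronglyMeasurable f) (a : α) : Integrable f (Measure.dirac a) := by
  refine ⟨hf.aestronglyMeasurable, ?_⟩
  simp [HasFiniteIntegral, lintegral_dirac]

private lemma lasso_cont {p : ℕ} (j : Fin p) (v : Fin p → ℝ) :
    Continuous (fun z : (Fin p → ℝ) × ℝ => z.1 j * (z.2 - z.1 ⬝ᵥ v)) := by
  simp only [dotProduct]
  fun_prop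

private lemma lasso_int_aux {p : ℕ} (H₀ : Measure ((Fin p → ℝ) × ℝ)) (j : Fin p)
    (hxx : ∀ l, Integrable (fun z : (Fin p → ℝ) × ℝ => z.1 j * z.1 l) H₀)
    (hxy : Integrable (fun z : (Fin p → ℝ) × ℝ => z.1 j * z.2) H₀)
    (v : Fin p → ℝ) :
    Integrable (fun z : (Fin p → ℝ) × ℝ => z.1 j * (z.2 - z.1 ⬝ᵥ v)) H₀ ∧
    ∫ z, z.1 j * (z.2 - z.1 ⬝ᵥ v) ∂H₀ =
      (∫ z, z.1 j * z.2 ∂H₀) - ∑ l, (∫ z, z.1 j * z.1 l ∂H₀) * v l := by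
  have hfun : (fun z : (Fin p → ℝ) × ℝ => z.1 j * (z.2 - z.1 ⬝ᵥ v)) =
      fun z => z.1 j * z.2 - ∑ l, (z.1 j * z.1 l) * v l := by
    funext z
    simp [dotProduct, mul_sub, Finset.mul_sum, mul_assoc]
  have hint : Integrable (fun z : (Fin p → ℝ) × ℝ => ∑ l, (z.1 j * z.1 l) * v l) H₀ :=
    integrable_finset_sum _ fun l _ => (hxx l).mul_const (v l)
  constructor
  · rw [hfun]; exact hxy.sub hint
  · rw [hfun, integral_sub hxy hint,
      integral_finset_sum _ fun l (_ : l ∈ Finset.univ) => (hxx l).mul_const (v l)]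
    simp [integral_mul_const]

/-- Proposition 2 of the paper: influence function of the multiple
lasso functional. If `b(ε)` has locally stable active set `{1,…,k}` and signs, and
satisfies the first-order conditions on the active set under the contaminated
distribution `H_ε = (1-ε)H₀ + ε·δ_{(x₀,y₀)}`, and `E_{H₀}[x_{1:k}x_{1:k}']` is
invertible, then `b'(0)` vanishes on the last `p - k` coordinates and its first `k`
coordinates equal
`(E_{H₀}[x_{1:k}x_{1:k}'])⁻¹·((x₀)_{1:k}(y₀ - x₀'b(0)) - E_{H₀}[x_{1:k}(y - x'b(0))])`. -/
theorem influence_function_lasso_multiple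
    {p : ℕ} {Ω : Type*} [MeasurableSpace Ω] (μ : Measure Ω) [IsProbabilityMeasure μ]
    (X : Ω → (Fin p → ℝ)) (e : Ω → ℝ) (hXm : Measurable X) (hem : Measurable e)
    (hind : IndepFun X e μ)
    (β₀ : Fin p → ℝ)
    (H₀ : Measure ((Fin p → ℝ) × ℝ))
    (hH₀ : H₀ = μ.map (fun ω => (X ω, X ω ⬝ᵥ β₀ + e ω)))
    (hxx : ∀ i i' : Fin p, Integrable (fun z : (Fin p → ℝ) × ℝ => z.1 i * z.1 i') H₀)
    (hxy : ∀ i : Fin p, Integrable (fun z : (Fin p → ℝ) × ℝ => z.1 i * z.2) H₀)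
    (hy2 : Integrable (fun z : (Fin p → ℝ) × ℝ => z.2 ^ 2) H₀)
    (lam : ℝ) (hlam : 0 ≤ lam)
    (x₀ : Fin p → ℝ) (y₀ : ℝ)
    (Hmix : ℝ → Measure ((Fin p → ℝ) × ℝ))
    (hHmix : ∀ ε : ℝ,
      Hmix ε = ENNReal.ofReal (1 - ε) • H₀ + ENNReal.ofReal ε • Measure.dirac (x₀, y₀))
    (k : ℕ) (hk : k ≤ p)
    (b : ℝ → (Fin p → ℝ)) (D : Fin p → ℝ)
    (hb : HasDerivWithinAt b D (Set.Ici 0) 0)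
    (hnz : ∀ j : Fin p, (j : ℕ) < k → b 0 j ≠ 0)
    (hz : ∀ j : Fin p, k ≤ (j : ℕ) → b 0 j = 0)
    (hloc : ∀ᶠ ε in nhdsWithin (0 : ℝ) (Set.Ici 0),
      (∀ j : Fin p, k ≤ (j : ℕ) → b ε j = 0) ∧
      (∀ j : Fin p, (j : ℕ) < k → Real.sign (b ε j) = Real.sign (b 0 j)) ∧
      (∀ j : Fin p, (j : ℕ) < k →
        (∫ z, z.1 j * (z.2 - z.1 ⬝ᵥ b ε) ∂(Hmix ε)) = lam * Real.sign (b ε j)))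
    (A : Matrix (Fin k) (Fin k) ℝ)
    (hA : ∀ i i' : Fin k, A i i' = ∫ z, z.1 (Fin.castLE hk i) * z.1 (Fin.castLE hk i') ∂H₀)
    (hAinv : IsUnit A.det) :
    (∀ j : Fin p, k ≤ (j : ℕ) → D j = 0) ∧
      (fun i : Fin k => D (Fin.castLE hk i)) =
        A⁻¹.mulVec (fun i : Fin k =>
          x₀ (Fin.castLE hk i) * (y₀ - x₀ ⬝ᵥ b 0)
            - ∫ z, z.1 (Fin.castLE hk i) * (z.2 - z.1 ⬝ᵥ b 0) ∂H₀) := by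
  have hB : ∀ l : Fin p, HasDerivWithinAt (fun ε => b ε l) (D l) (Set.Ici 0) 0 :=
    hasDerivWithinAt_pi.mp hb
  have h0mem : (0:ℝ) ∈ Set.Ici (0:ℝ) := Set.self_mem_Ici
  have hUD : UniqueDiffWithinAt ℝ (Set.Ici (0:ℝ)) 0 := uniqueDiffOn_Ici 0 0 Set.self_mem_Ici
  -- Part 1: derivative vanishes off the active set
  have part1 : ∀ j : Fin p, k ≤ (j : ℕ) → D j = 0 := by
    intro j hj
    have hev : (fun ε => b ε j) =ᶠ[nhdsWithin (0:ℝ) (Set.Ici 0)] fun _ => (0:ℝ) :=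
      hloc.mono fun ε hε => hε.1 j hj
    have h0 : HasDerivWithinAt (fun ε => b ε j) 0 (Set.Ici 0) 0 :=
      (hasDerivWithinAt_const (0:ℝ) (Set.Ici (0:ℝ)) (0:ℝ)).congr_of_eventuallyEq hev (hz j hj)
    exact UniqueDiffWithinAt.eq_deriv _ hUD (hB j) h0
  -- key first-order equation from differentiating the KKT condition
  have key : ∀ j : Fin p, (j:ℕ) < k →
      ∑ l, (∫ z, z.1 j * z.1 l ∂H₀) * D l =
        x₀ j * (y₀ - x₀ ⬝ᵥ b 0) - ∫ z, z.1 j * (z.2 - z.1 ⬝ᵥ b 0) ∂H₀ := by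
    intro j hj
    have hIG : ∀ v : Fin p → ℝ, ∫ z, z.1 j * (z.2 - z.1 ⬝ᵥ v) ∂H₀ =
        (∫ z, z.1 j * z.2 ∂H₀) - ∑ l, (∫ z, z.1 j * z.1 l ∂H₀) * v l :=
      fun v => (lasso_int_aux H₀ j (fun l => hxx j l) (hxy j) v).2
    -- eventual constancy of the expanded FOC function
    have hF1 : (fun ε => (1 - ε) *
          ((∫ z, z.1 j * z.2 ∂H₀) - ∑ l, (∫ z, z.1 j * z.1 l ∂H₀) * b ε l)
          + ε * (x₀ j * (y₀ - x₀ ⬝ᵥ b ε)))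
        =ᶠ[nhdsWithin (0:ℝ) (Set.Ici 0)] (fun _ => lam * Real.sign (b 0 j)) := by
      have hlt1 : Set.Iio (1:ℝ) ∈ nhdsWithin (0:ℝ) (Set.Ici 0) :=
        nhdsWithin_le_nhds (Iio_mem_nhds (by norm_num))
      filter_upwards [hloc, hlt1, self_mem_nhdsWithin] with ε hε hε1 hε0
      have hε1' : ε < 1 := hε1
      have hε0' : (0:ℝ) ≤ ε := hε0
      have hfoc := hε.2.2 j hj
      rw [hε.2.1 j hj] at hfoc
      have hintH : Integrable (fun z : (Fin p → ℝ) × ℝ => z.1 j * (z.2 - z.1 ⬝ᵥ b ε)) H₀ :=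
        (lasso_int_aux H₀ j (fun l => hxx j l) (hxy j) (b ε)).1
      rw [hHmix ε, integral_add_measure (hintH.smul_measure ENNReal.ofReal_ne_top)
          (((lasso_integrable_dirac _ (lasso_cont j (b ε)).stronglyMeasurable
            (x₀, y₀))).smul_measure ENNReal.ofReal_ne_top),
        integral_smul_measure, integral_smul_measure, integral_dirac,
        ENNReal.toReal_ofReal (by linarith), ENNReal.toReal_ofReal hε0', hIG (b ε)] at hfoc
      simpa [smul_eq_mul] using hfoc
    have h0der : HasDerivWithinAt (fun ε => (1 - ε) *
          ((∫ z, z.1 j * z.2 ∂H₀) - ∑ l, (∫ z, z.1 j * z.1 l ∂H₀) * b ε l)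
          + ε * (x₀ j * (y₀ - x₀ ⬝ᵥ b ε))) (0:ℝ) (Set.Ici 0) 0 :=
      (hasDerivWithinAt_const (0:ℝ) (Set.Ici (0:ℝ)) (lam * Real.sign (b 0 j))).congr_of_eventuallyEq
        hF1 (hF1.self_of_nhdsWithin h0mem)
    have h1ε : HasDerivWithinAt (fun ε : ℝ => 1 - ε) (-1 : ℝ) (Set.Ici 0) 0 := by
      simpa using (hasDerivWithinAt_id (0:ℝ) (Set.Ici 0)).const_sub (1:ℝ)
    have hG : HasDerivWithinAt
        (fun ε => (∫ z, z.1 j * z.2 ∂H₀) - ∑ l, (∫ z, z.1 j * z.1 l ∂H₀) * b ε l)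
        (-(∑ l, (∫ z, z.1 j * z.1 l ∂H₀) * D l)) (Set.Ici 0) 0 :=
      HasDerivWithinAt.const_sub _ (HasDerivWithinAt.fun_sum fun l _ => (hB l).const_mul _)
    have hφ : HasDerivWithinAt (fun ε => x₀ j * (y₀ - x₀ ⬝ᵥ b ε))
        (x₀ j * (-(∑ l, x₀ l * D l))) (Set.Ici 0) 0 := by
      have hdp : HasDerivWithinAt (fun ε => x₀ ⬝ᵥ b ε) (∑ l, x₀ l * D l) (Set.Ici 0) 0 := by
        simp only [dotProduct]
        exact HasDerivWithinAt.fun_sum fun l _ => (hB l).const_mul _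
      exact (hdp.const_sub y₀).const_mul (x₀ j)
    have hFder := (h1ε.mul hG).add ((hasDerivWithinAt_id (0:ℝ) (Set.Ici 0)).mul hφ)
    have heq := UniqueDiffWithinAt.eq_deriv _ hUD hFder h0der
    beta_reduce at heq
    simp only [id_eq] at heq
    rw [hIG (b 0)]
    linarith [heq]
  -- sum over all coordinates reduces to active coordinates
  have hsplit : ∀ f : Fin p → ℝ,
      (∑ l, f l * D l) = ∑ i : Fin k, f (Fin.castLE hk i) * D (Fin.castLE hk i) := by
    intro f
    have hmap : ∀ l ∈ Finset.univ, l ∉ Finset.univ.map (Fin.castLEEmb hk) → f l * D l = 0 := by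
      intro l _ hl
      have hkl : k ≤ (l:ℕ) := by
        by_contra h
        push_neg at h
        exact hl (Finset.mem_map.mpr ⟨⟨(l:ℕ), h⟩, Finset.mem_univ _, by
          simp [Fin.castLEEmb, Fin.ext_iff]⟩)
      simp [part1 l hkl]
    calc ∑ l, f l * D l
        = ∑ l ∈ Finset.univ.map (Fin.castLEEmb hk), f l * D l :=
          (Finset.sum_subset (Finset.subset_univ _) hmap).symm
      _ = ∑ i : Fin k, f (Fin.castLE hk i) * D (Fin.castLE hk i) := by
          rw [Finset.sum_map]; rfl
  have hAv : A.mulVec (fun i : Fin k => D (Fin.castLE hk i)) = (fun i : Fin k =>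
      x₀ (Fin.castLE hk i) * (y₀ - x₀ ⬝ᵥ b 0)
        - ∫ z, z.1 (Fin.castLE hk i) * (z.2 - z.1 ⬝ᵥ b 0) ∂H₀) := by
    funext i
    have hkey := key (Fin.castLE hk i) (by simpa using i.2)
    rw [hsplit] at hkey
    simp only [Matrix.mulVec, dotProduct, hA]
    exact hkey
  refine ⟨part1, ?_⟩
  calc (fun i : Fin k => D (Fin.castLE hk i))
      = (A⁻¹ * A).mulVec (fun i : Fin k => D (Fin.castLE hk i)) := by
        rw [Matrix.nonsing_inv_mul A hAinv, Matrix.one_mulVec]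
    _ = A⁻¹.mulVec (A.mulVec (fun i : Fin k => D (Fin.castLE hk i))) :=
        (Matrix.mulVec_mulVec _ _ _).symm
    _ = _ := by rw [hAv]
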